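/- For 0 < a₁ < a₂, the hyperbolic catenaries with parameters a₁, a₂ intersect at some t if and only if ρ(a₁,t) = ρ(a₂,t) for some t ≥ a₂, and since t ↦ ρ(a₂,t) − ρ(a₁,t) is strictly increasing with value −ρ(a₂,a₁) < 0 at t = a₂ and limit ϱ(a₂) − ϱ(a₁) as t → ∞, such t exists (and is unique) if and only if ϱ(a₁) < ϱ(a₂). -/

import Mathlib

open Real MeasureTheory
open Set Filter

noncomputable def rho (a t : ℝ) : ℝ :=
  ∫ τ in a..t, Real.sinh (2*a) /
    (Real.cosh τ * Real.sqrt (Real.sinh (2*τ)^2 - Real.sinh (2*a)^2))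

noncomputable def varrho (a : ℝ) : ℝ :=
  ∫ t in Set.Ioi (0:ℝ),
    Real.sinh (2*a) /
      (Real.cosh (a+t) * Real.sqrt (Real.sinh (2*(a+t))^2 - Real.sinh (2*a)^2))

noncomputable def hcf (a τ : ℝ) : ℝ :=
  Real.sinh (2*a) / (Real.cosh τ * Real.sqrt (Real.sinh (2*τ)^2 - Real.sinh (2*a)^2))

lemma hcf_meas (a : ℝ) : Measurable (hcf a) := by
  apply Measurable.div measurable_const
  exact (Real.continuous_cosh.mul (Real.continuous_sqrt.comp (by continuity))).measurable

lemma den_pos {a τ : ℝ} (ha : 0 < a) (h : a < τ) :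
    0 < Real.sinh (2*τ)^2 - Real.sinh (2*a)^2 := by
  have h1 : 0 < Real.sinh (2*a) := by
    rw [← Real.sinh_zero]; exact Real.sinh_lt_sinh.2 (by linarith)
  have h2 : Real.sinh (2*a) < Real.sinh (2*τ) := Real.sinh_lt_sinh.2 (by linarith)
  nlinarith

lemma hcf_pos {a τ : ℝ} (ha : 0 < a) (h : a < τ) : 0 < hcf a τ := by
  have h1 : 0 < Real.sinh (2*a) := by
    rw [← Real.sinh_zero]; exact Real.sinh_lt_sinh.2 (by linarith)
  exact div_pos h1 (mul_pos (Real.cosh_pos τ) (Real.sqrt_pos.2 (den_pos ha h)))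

lemma hcf_lt {a₁ a₂ τ : ℝ} (h1 : 0 < a₁) (h12 : a₁ < a₂) (h2 : a₂ < τ) :
    hcf a₁ τ < hcf a₂ τ := by
  have s1 : 0 < Real.sinh (2*a₁) := by
    rw [← Real.sinh_zero]; exact Real.sinh_lt_sinh.2 (by linarith)
  have s12 : Real.sinh (2*a₁) < Real.sinh (2*a₂) := Real.sinh_lt_sinh.2 (by linarith)
  have d1 := den_pos h1 (h12.trans h2)
  have d2 := den_pos (h1.trans h12) h2
  have q12 : Real.sqrt (Real.sinh (2*τ)^2 - Real.sinh (2*a₂)^2)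
      < Real.sqrt (Real.sinh (2*τ)^2 - Real.sinh (2*a₁)^2) := by
    apply Real.sqrt_lt_sqrt d2.le
    nlinarith
  have q2 : 0 < Real.sqrt (Real.sinh (2*τ)^2 - Real.sinh (2*a₂)^2) := Real.sqrt_pos.2 d2
  have hc : 0 < Real.cosh τ := Real.cosh_pos τ
  unfold hcf
  rw [div_lt_div_iff₀ (by positivity) (by positivity)]
  have A : Real.cosh τ * Real.sqrt (Real.sinh (2*τ)^2 - Real.sinh (2*a₂)^2)
      < Real.cosh τ * Real.sqrt (Real.sinh (2*τ)^2 - Real.sinh (2*a₁)^2) :=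
    mul_lt_mul_of_pos_left q12 hc
  exact mul_lt_mul s12 A.le (mul_pos hc q2) (s1.trans s12).le

lemma cosh_diff (x y : ℝ) :
    Real.cosh x - Real.cosh y = 2 * Real.sinh ((x+y)/2) * Real.sinh ((x-y)/2) := by
  have h1 := Real.cosh_add ((x+y)/2) ((x-y)/2)
  have h2 := Real.cosh_sub ((x+y)/2) ((x-y)/2)
  have e1 : (x+y)/2 + (x-y)/2 = x := by ring
  have e2 : (x+y)/2 - (x-y)/2 = y := by ring
  rw [e1] at h1; rw [e2] at h2; linarith

lemma sq_diff_eq (a τ : ℝ) : Real.sinh (2*τ)^2 - Real.sinh (2*a)^2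
    = Real.cosh (2*τ)^2 - Real.cosh (2*a)^2 := by
  have := Real.cosh_sq (2*τ); have := Real.cosh_sq (2*a); linarith

-- lower bound near a
lemma den_lb_near {a τ : ℝ} (ha : 0 < a) (hτ : a < τ) :
    4 * Real.sinh (2*a) * (τ - a) ≤ Real.sinh (2*τ)^2 - Real.sinh (2*a)^2 := by
  rw [sq_diff_eq]
  have hd : Real.cosh (2*τ) - Real.cosh (2*a)
      = 2 * Real.sinh (τ+a) * Real.sinh (τ-a) := by
    have := cosh_diff (2*τ) (2*a)
    have e1 : (2*τ+2*a)/2 = τ+a := by ring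
    have e2 : (2*τ-2*a)/2 = τ-a := by ring
    rw [e1, e2] at this; linarith
  have hs1 : Real.sinh (2*a) ≤ Real.sinh (τ+a) := Real.sinh_le_sinh.2 (by linarith)
  have hs2 : τ - a ≤ Real.sinh (τ-a) := Real.self_le_sinh_iff.2 (by linarith)
  have hsa : 0 < Real.sinh (2*a) := by
    rw [← Real.sinh_zero]; exact Real.sinh_lt_sinh.2 (by linarith)
  have hcc : 0 < Real.cosh (2*τ) - Real.cosh (2*a) := by
    rw [hd]; nlinarith
  have hsum : 2 ≤ Real.cosh (2*τ) + Real.cosh (2*a) :=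
    by linarith [Real.one_le_cosh (2*τ), Real.one_le_cosh (2*a)]
  have key : 2 * Real.sinh (2*a) * (τ - a) ≤ Real.cosh (2*τ) - Real.cosh (2*a) := by
    rw [hd]; nlinarith
  nlinarith [mul_le_mul key hsum (by norm_num : (0:ℝ) ≤ 2) hcc.le]

-- lower bound far from a
lemma den_lb_far {a τ : ℝ} (ha : 0 < a) (hτ : a + 1 ≤ τ) :
    (Real.cosh (2*a+2) - Real.cosh (2*a)) * Real.exp (2*τ) / 2
      ≤ Real.sinh (2*τ)^2 - Real.sinh (2*a)^2 := by
  rw [sq_diff_eq]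
  have hm : 0 < Real.cosh (2*a+2) - Real.cosh (2*a) := by
    have : Real.cosh (2*a) < Real.cosh (2*a+2) := by
      rw [Real.cosh_lt_cosh, abs_of_pos (by linarith), abs_of_pos (by linarith)]; linarith
    linarith
  have h1 : Real.cosh (2*a+2) ≤ Real.cosh (2*τ) := by
    rw [Real.cosh_le_cosh, abs_of_pos (by linarith), abs_of_pos (by linarith)]; linarith
  have h2 : Real.exp (2*τ) / 2 ≤ Real.cosh (2*τ) := by
    rw [Real.cosh_eq]; have := Real.exp_pos (-(2*τ)); linarith
  have h0 : 0 ≤ Real.cosh (2*a) := (Real.cosh_pos _).le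
  have e2p : 0 < Real.exp (2*τ) / 2 := by positivity
  calc (Real.cosh (2*a+2) - Real.cosh (2*a)) * Real.exp (2*τ) / 2
      ≤ (Real.cosh (2*τ) - Real.cosh (2*a)) * Real.cosh (2*τ) := by
        rw [mul_div_assoc]
        exact mul_le_mul (by linarith) h2 e2p.le (by linarith [Real.cosh_pos (2*τ)])
    _ ≤ Real.cosh (2*τ)^2 - Real.cosh (2*a)^2 := by nlinarith [Real.cosh_pos (2*a)]

lemma hcf_bound_near {a τ : ℝ} (ha : 0 < a) (hτ : a < τ) :
    hcf a τ ≤ (Real.sinh (2*a) / (2 * Real.sqrt (Real.sinh (2*a)))) * (τ - a) ^ (-(1/2) : ℝ) := by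
  have hsa : 0 < Real.sinh (2*a) := by
    rw [← Real.sinh_zero]; exact Real.sinh_lt_sinh.2 (by linarith)
  have hden := den_lb_near ha hτ
  have hsq : 2 * Real.sqrt (Real.sinh (2*a)) * Real.sqrt (τ - a)
      ≤ Real.sqrt (Real.sinh (2*τ)^2 - Real.sinh (2*a)^2) := by
    have : Real.sqrt (4 * Real.sinh (2*a) * (τ - a))
        ≤ Real.sqrt (Real.sinh (2*τ)^2 - Real.sinh (2*a)^2) := Real.sqrt_le_sqrt hden
    calc 2 * Real.sqrt (Real.sinh (2*a)) * Real.sqrt (τ - a)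
        = Real.sqrt (4 * Real.sinh (2*a) * (τ - a)) := by
          rw [show (4:ℝ) * Real.sinh (2*a) * (τ - a) = (2*Real.sqrt (Real.sinh (2*a)))^2 * (τ-a) by
            rw [mul_pow, Real.sq_sqrt hsa.le]; ring,
            Real.sqrt_mul (by positivity), Real.sqrt_sq (by positivity)]
      _ ≤ _ := this
  have hq : 0 < Real.sqrt (τ - a) := Real.sqrt_pos.2 (by linarith)
  have hcosh : 1 ≤ Real.cosh τ := Real.one_le_cosh τ
  have hdpos : 0 < 2 * Real.sqrt (Real.sinh (2*a)) * Real.sqrt (τ - a) := by positivity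
  have step1 : hcf a τ ≤ Real.sinh (2*a) / (2 * Real.sqrt (Real.sinh (2*a)) * Real.sqrt (τ - a)) := by
    apply div_le_div_of_nonneg_left hsa.le hdpos
    calc 2 * Real.sqrt (Real.sinh (2*a)) * Real.sqrt (τ - a)
        ≤ Real.sqrt (Real.sinh (2*τ)^2 - Real.sinh (2*a)^2) := hsq
      _ ≤ Real.cosh τ * Real.sqrt (Real.sinh (2*τ)^2 - Real.sinh (2*a)^2) := by
          nlinarith [Real.sqrt_nonneg (Real.sinh (2*τ)^2 - Real.sinh (2*a)^2)]
  calc hcf a τ ≤ Real.sinh (2*a) / (2 * Real.sqrt (Real.sinh (2*a)) * Real.sqrt (τ - a)) := step1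
    _ = (Real.sinh (2*a) / (2 * Real.sqrt (Real.sinh (2*a)))) * (τ - a) ^ (-(1/2) : ℝ) := by
        rw [Real.rpow_neg (by linarith), ← Real.sqrt_eq_rpow]
        field_simp

lemma hcf_bound_far {a τ : ℝ} (ha : 0 < a) (hτ : a + 1 ≤ τ) :
    hcf a τ ≤ (2 * Real.sinh (2*a) / Real.sqrt ((Real.cosh (2*a+2) - Real.cosh (2*a)) / 2))
      * Real.exp (-2*τ) := by
  set m : ℝ := Real.cosh (2*a+2) - Real.cosh (2*a) with hm
  have hm0 : 0 < m := by
    have h : Real.cosh (2*a) < Real.cosh (2*a+2) := by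
      apply Real.cosh_lt_cosh.2
      rw [abs_of_pos (by linarith : (0:ℝ) < 2*a), abs_of_pos (by linarith : (0:ℝ) < 2*a+2)]
      linarith
    rw [hm]; linarith
  have hsa : 0 < Real.sinh (2*a) := by
    rw [← Real.sinh_zero]; exact Real.sinh_lt_sinh.2 (by linarith)
  have hden := den_lb_far ha hτ
  have hexp : Real.exp (2*τ) = (Real.exp τ)^2 := by
    rw [← Real.exp_nat_mul]; norm_num [mul_comm]
  have hsq : Real.sqrt (m/2) * Real.exp τ
      ≤ Real.sqrt (Real.sinh (2*τ)^2 - Real.sinh (2*a)^2) := by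
    have h1 : Real.sqrt (m * Real.exp (2*τ) / 2)
        ≤ Real.sqrt (Real.sinh (2*τ)^2 - Real.sinh (2*a)^2) := Real.sqrt_le_sqrt hden
    calc Real.sqrt (m/2) * Real.exp τ
        = Real.sqrt (m * Real.exp (2*τ) / 2) := by
          rw [show m * Real.exp (2*τ) / 2 = (m/2) * (Real.exp τ)^2 by rw [← hexp]; ring,
            Real.sqrt_mul (by positivity), Real.sqrt_sq (Real.exp_pos τ).le]
      _ ≤ _ := h1
  have hct : Real.exp τ / 2 ≤ Real.cosh τ := by
    rw [Real.cosh_eq]; have := Real.exp_pos (-τ); linarith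
  have hdb : Real.exp τ / 2 * (Real.sqrt (m/2) * Real.exp τ)
      ≤ Real.cosh τ * Real.sqrt (Real.sinh (2*τ)^2 - Real.sinh (2*a)^2) := by
    apply mul_le_mul hct hsq (by positivity) (Real.cosh_pos τ).le
  have step1 : hcf a τ ≤ Real.sinh (2*a) / (Real.exp τ / 2 * (Real.sqrt (m/2) * Real.exp τ)) :=
    div_le_div_of_nonneg_left hsa.le (by positivity) hdb
  calc hcf a τ ≤ Real.sinh (2*a) / (Real.exp τ / 2 * (Real.sqrt (m/2) * Real.exp τ)) := step1
    _ = (2 * Real.sinh (2*a) / Real.sqrt (m/2)) * Real.exp (-2*τ) := by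
        have hs : Real.sqrt (m/2) ≠ 0 := by positivity
        have he : Real.exp (-2*τ) = (Real.exp τ * Real.exp τ)⁻¹ := by
          rw [← Real.exp_add, ← Real.exp_neg]; congr 1; ring
        rw [he]
        have hep : Real.exp τ ≠ 0 := (Real.exp_pos τ).ne'
        field_simp

lemma hcf_integrableOn {a : ℝ} (ha : 0 < a) : IntegrableOn (hcf a) (Ioi a) := by
  have hmeas : AEStronglyMeasurable (hcf a) volume := (hcf_meas a).aestronglyMeasurable
  have hunion : Ioi a = Ioc a (a+1) ∪ Ioi (a+1) := (Set.Ioc_union_Ioi_eq_Ioi (by linarith)).symm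
  rw [hunion]
  apply IntegrableOn.union
  · -- near part
    have hg : IntegrableOn (fun τ : ℝ =>
        (Real.sinh (2*a) / (2 * Real.sqrt (Real.sinh (2*a)))) * (τ - a) ^ (-(1/2) : ℝ))
        (Ioc a (a+1)) := by
      apply Integrable.const_mul
      have h1 : IntervalIntegrable (fun x : ℝ => x ^ (-(1/2) : ℝ)) volume (a - a) (a + 1 - a) :=
        intervalIntegral.intervalIntegrable_rpow' (by norm_num)
      have h2 := h1.comp_sub_right a
      rw [intervalIntegrable_iff_integrableOn_Ioc_of_le (by linarith)] at h2
      have e : a + 1 - a = a + 1 - a := rfl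
      simpa [show a + 1 - a + a = a + 1 by ring, add_comm, IntegrableOn] using h2
    apply hg.mono' hmeas.restrict
    rw [ae_restrict_iff' measurableSet_Ioc]
    filter_upwards with τ hτ
    rw [Real.norm_eq_abs, abs_of_pos (hcf_pos ha hτ.1)]
    exact hcf_bound_near ha hτ.1
  · -- far part
    have hg : IntegrableOn (fun τ : ℝ =>
        (2 * Real.sinh (2*a) / Real.sqrt ((Real.cosh (2*a+2) - Real.cosh (2*a)) / 2))
          * Real.exp (-2*τ)) (Ioi (a+1)) :=
      (exp_neg_integrableOn_Ioi (a+1) (by norm_num : (0:ℝ) < 2)).const_mul _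
    apply hg.mono' hmeas.restrict
    rw [ae_restrict_iff' measurableSet_Ioi]
    filter_upwards with τ hτ
    rw [Real.norm_eq_abs, abs_of_pos (hcf_pos ha (by simp at hτ; linarith))]
    exact hcf_bound_far ha (le_of_lt hτ)

lemma hcf_intervalIntegrable {a s t : ℝ} (ha : 0 < a) (hs : a ≤ s) (hst : s ≤ t) :
    IntervalIntegrable (hcf a) volume s t := by
  rw [intervalIntegrable_iff_integrableOn_Ioc_of_le hst]
  exact (hcf_integrableOn ha).mono_set (fun x hx => lt_of_le_of_lt hs hx.1)

lemma rho_eq_set {a t : ℝ} (hat : a ≤ t) : rho a t = ∫ τ in Ioc a t, hcf a τ := by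
  rw [rho, intervalIntegral.integral_of_le hat]; rfl

lemma rho_pos {a t : ℝ} (ha : 0 < a) (hat : a < t) : 0 < rho a t := by
  rw [rho]
  exact intervalIntegral.intervalIntegral_pos_of_pos_on
    (hcf_intervalIntegrable ha le_rfl hat.le) (fun x hx => hcf_pos ha hx.1) hat

lemma rho_same (a : ℝ) : rho a a = 0 := by
  rw [rho, intervalIntegral.integral_same]

lemma varrho_eq_set {a : ℝ} : varrho a = ∫ τ in Ioi a, hcf a τ := by
  rw [varrho]
  have h := MeasurableEmbedding.setIntegral_map (μ := volume)
    (f := fun x : ℝ => a + x) (measurableEmbedding_addLeft a) (hcf a) (Ioi a)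
  rw [map_add_left_eq_self] at h
  rw [h]
  have hpre : (fun x : ℝ => a + x) ⁻¹' (Ioi a) = Ioi (0:ℝ) := by
    ext x; simp
  rw [hpre]; rfl

lemma tendsto_rho {a : ℝ} (ha : 0 < a) :
    Tendsto (rho a) atTop (nhds (varrho a)) := by
  rw [varrho_eq_set]
  exact intervalIntegral_tendsto_integral_Ioi a (hcf_integrableOn ha) tendsto_id

lemma rho_continuousOn {a b : ℝ} (ha : 0 < a) :
    ContinuousOn (rho a) (Icc a b) := by
  have hint : IntegrableOn (hcf a) (Icc a b) := by
    have h1 : IntegrableOn (hcf a) (Ioc a b) :=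
      (hcf_integrableOn ha).mono_set Ioc_subset_Ioi_self
    exact h1.congr_set_ae Ioc_ae_eq_Icc.symm
  have := intervalIntegral.continuousOn_primitive (f := hcf a) (μ := volume) hint
  apply this.congr
  intro x hx
  exact rho_eq_set hx.1

theorem intersection_iff (a₁ a₂ : ℝ) (h1 : 0 < a₁) (h12 : a₁ < a₂) :
    ((∃ t, a₂ ≤ t ∧ rho a₁ t = rho a₂ t) ↔ varrho a₁ < varrho a₂) ∧
    (∀ t₁ t₂, a₂ ≤ t₁ → a₂ ≤ t₂ → rho a₁ t₁ = rho a₂ t₁ → rho a₁ t₂ = rho a₂ t₂ →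
      t₁ = t₂) := by
  have ha2 : 0 < a₂ := h1.trans h12
  set D : ℝ → ℝ := fun t => rho a₂ t - rho a₁ t with hDdef
  have hmono : StrictMonoOn D (Ici a₂) := by
    intro s hs t ht hst
    simp only [mem_Ici] at hs ht
    have i1 : IntervalIntegrable (hcf a₁) volume s t :=
      hcf_intervalIntegrable h1 (by linarith) hst.le
    have i2 : IntervalIntegrable (hcf a₂) volume s t :=
      hcf_intervalIntegrable ha2 hs hst.le
    have add1 : rho a₁ s + ∫ x in s..t, hcf a₁ x = rho a₁ t := by
      rw [show rho a₁ s = ∫ x in a₁..s, hcf a₁ x from rfl,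
          show rho a₁ t = ∫ x in a₁..t, hcf a₁ x from rfl]
      exact intervalIntegral.integral_add_adjacent_intervals
        (hcf_intervalIntegrable h1 le_rfl (by linarith)) i1
    have add2 : rho a₂ s + ∫ x in s..t, hcf a₂ x = rho a₂ t := by
      rw [show rho a₂ s = ∫ x in a₂..s, hcf a₂ x from rfl,
          show rho a₂ t = ∫ x in a₂..t, hcf a₂ x from rfl]
      exact intervalIntegral.integral_add_adjacent_intervals
        (hcf_intervalIntegrable ha2 le_rfl hs) i2
    have hpos : 0 < ∫ x in s..t, (hcf a₂ x - hcf a₁ x) :=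
      intervalIntegral.intervalIntegral_pos_of_pos_on (i2.sub i1)
        (fun x hx => sub_pos.2 (hcf_lt h1 h12 (lt_of_le_of_lt hs hx.1))) hst
    rw [intervalIntegral.integral_sub i2 i1] at hpos
    simp only [hDdef]
    linarith
  have hD0 : D a₂ < 0 := by
    simp only [hDdef, rho_same]
    have := rho_pos h1 h12
    linarith
  have hlim : Tendsto D atTop (nhds (varrho a₂ - varrho a₁)) :=
    (tendsto_rho ha2).sub (tendsto_rho h1)
  refine ⟨⟨?_, ?_⟩, ?_⟩
  · rintro ⟨t, ht, heq⟩
    have hDt : D t = 0 := by simp only [hDdef]; linarith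
    have ht' : a₂ < t := by
      rcases lt_or_eq_of_le ht with h | h
      · exact h
      · exfalso; rw [← h] at hDt; rw [hDt] at hD0; exact lt_irrefl 0 hD0
    have h01 : 0 < D (t+1) := by
      have := hmono (mem_Ici.2 ht) (mem_Ici.2 (by linarith)) (lt_add_one t)
      linarith [hDt ▸ this]
    have hle : D (t+1) ≤ varrho a₂ - varrho a₁ := by
      apply ge_of_tendsto hlim
      filter_upwards [eventually_ge_atTop (t+1)] with s hs
      rcases eq_or_lt_of_le hs with h | h
      · rw [h]
      · exact (hmono (mem_Ici.2 (by linarith)) (mem_Ici.2 (by linarith)) h).le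
    linarith
  · intro hlt
    have hL : 0 < varrho a₂ - varrho a₁ := by linarith
    have hev : ∀ᶠ s in atTop, 0 < D s :=
      hlim.eventually (eventually_gt_nhds hL)
    obtain ⟨T₀, hT₀⟩ := hev.exists_forall_of_atTop
    set T := max T₀ (a₂ + 1) with hT
    have hTa : a₂ ≤ T := le_trans (by linarith) (le_max_right _ _)
    have hDT : 0 < D T := hT₀ T (le_max_left _ _)
    have hcont : ContinuousOn D (Icc a₂ T) := by
      apply ContinuousOn.sub
      · exact (rho_continuousOn (b := T) ha2)
      · exact (rho_continuousOn (b := T) h1).mono (Icc_subset_Icc_left h12.le)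
    obtain ⟨t, htmem, hDt⟩ := intermediate_value_Icc hTa hcont ⟨hD0.le, hDT.le⟩
    refine ⟨t, htmem.1, ?_⟩
    simp only [hDdef] at hDt
    linarith
  · intro t₁ t₂ h₁ h₂ e₁ e₂
    apply hmono.injOn (mem_Ici.2 h₁) (mem_Ici.2 h₂)
    simp only [hDdef]
    linarith
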